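/- arXiv:1201.0399 — 7 statements merged into one kernel-verified Lean document; each statement's English description precedes it below -/
import Mathlib

section
/- Let A = (a_{jk}) be a 3×3 complex Hermitian matrix, let u, n ∈ ℝ³, and let ρ = (1/2)(I + Σ_j n_j σ_j). Then Σ_j [−i u_j σ_j, ρ] + (1/2) Σ_{j,k} a_{jk} (σ_j ρ σ_k − (1/2)(σ_k σ_j ρ + ρ σ_k σ_j)) = (1/2) Σ_l m_l σ_l, where m = b + 2(u × n) + (A^S − tr(A^S) I) n ∈ ℝ³, A^S is the real symmetric matrix with entries (a_{jk} + a_{kj})/2 (equal to the real part of A since A is Hermitian), and b ∈ ℝ³ has components b_l = i Σ_{j,k} a_{jk} ε_{jkl}, with ε the Levi-Civita symbol. -/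
open Matrix

set_option maxHeartbeats 2000000

/-- The Pauli matrices σ₁, σ₂, σ₃ (indexed by `Fin 3`). -/
noncomputable def pauli : Fin 3 → Matrix (Fin 2) (Fin 2) ℂ
  | 0 => !![0, 1; 1, 0]
  | 1 => !![0, -Complex.I; Complex.I, 0]
  | 2 => !![1, 0; 0, -1]

/-- The Levi-Civita symbol on three indices. -/
def levicivita (j k l : Fin 3) : ℝ :=
  if (j, k, l) = (0, 1, 2) ∨ (j, k, l) = (1, 2, 0) ∨ (j, k, l) = (2, 0, 1) then 1
  else if (j, k, l) = (2, 1, 0) ∨ (j, k, l) = (1, 0, 2) ∨ (j, k, l) = (0, 2, 1) then -1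
  else 0

/-- The cross product on ℝ³. -/
def cross (u v : Fin 3 → ℝ) : Fin 3 → ℝ :=
  ![u 1 * v 2 - u 2 * v 1, u 2 * v 0 - u 0 * v 2, u 0 * v 1 - u 1 * v 0]

/-- Bloch-vector form of the Lindblad-Kossakowski right-hand side:
Σ_j [−i u_j σ_j, ρ] + (1/2) Σ_{j,k} a_{jk} (σ_j ρ σ_k − (1/2){σ_k σ_j, ρ})
  = (1/2) Σ_l m_l σ_l with m = b + 2(u × n) + (Aˢ − tr(Aˢ) I) n. -/
theorem lindblad_bloch_projection
    (A : Matrix (Fin 3) (Fin 3) ℂ) (hA : A.IsHermitian)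
    (u n : Fin 3 → ℝ)
    (ρ : Matrix (Fin 2) (Fin 2) ℂ)
    (hρ : ρ = ((1 : ℂ)/2) • ((1 : Matrix (Fin 2) (Fin 2) ℂ) + ∑ j, (n j : ℂ) • pauli j))
    (AS : Matrix (Fin 3) (Fin 3) ℝ)
    (hAS : ∀ j k, AS j k = ((A j k + A k j) / 2).re)
    (b : Fin 3 → ℝ)
    (hb : ∀ l, (b l : ℂ) = Complex.I * ∑ j, ∑ k, A j k * ((levicivita j k l : ℝ) : ℂ))
    (m : Fin 3 → ℝ)
    (hm : ∀ l, m l = b l + 2 * cross u n l + (AS.mulVec n l - AS.trace * n l)) :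
    (∑ j, (((-Complex.I) * (u j : ℂ)) • pauli j * ρ
            - ρ * (((-Complex.I) * (u j : ℂ)) • pauli j)))
      + ((1 : ℂ)/2) • ∑ j, ∑ k, A j k •
          (pauli j * ρ * pauli k
            - ((1 : ℂ)/2) • (pauli k * pauli j * ρ + ρ * (pauli k * pauli j)))
    = ((1 : ℂ)/2) • ∑ l, (m l : ℂ) • pauli l := by
  have hASC : ∀ j k, (AS j k : ℂ) = (A j k + A k j) / 2 := by
    intro j k
    rw [hAS, (hA.apply k j).symm]
    rw [show star (A j k) = (starRingEnd ℂ) (A j k) from rfl, Complex.add_conj]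
    norm_num
  have hmC : ∀ l, (m l : ℂ) =
      (Complex.I * ∑ j, ∑ k, A j k * ((levicivita j k l : ℝ) : ℂ))
      + 2 * ((cross u n l : ℝ) : ℂ)
      + ((∑ k, ((A l k + A k l) / 2) * (n k : ℂ)) - (∑ j, A j j) * (n l : ℂ)) := by
    intro l
    have h1 : (m l : ℂ) = (b l : ℂ) + 2 * ((cross u n l : ℝ) : ℂ)
        + (((AS.mulVec n l : ℝ) : ℂ) - ((AS.trace : ℝ) : ℂ) * ((n l : ℝ) : ℂ)) := by
      rw [hm l]; push_cast; ring
    rw [h1, hb l]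
    simp only [Matrix.mulVec, Matrix.trace, Matrix.diag, dotProduct, Fin.sum_univ_three]
    push_cast
    rw [hASC, hASC, hASC, hASC, hASC, hASC]
    ring
  have hρe : ρ = !![(1 + (n 2 : ℂ))/2, ((n 0 : ℂ) - Complex.I * n 1)/2;
      ((n 0 : ℂ) + Complex.I * n 1)/2, (1 - (n 2 : ℂ))/2] := by
    rw [hρ]
    ext i j
    fin_cases i <;> fin_cases j <;>
      simp [Fin.sum_univ_three, pauli, Matrix.one_apply] <;> ring
  have p0 : pauli 0 = !![0, 1; 1, 0] := rfl
  have p1 : pauli 1 = !![0, -Complex.I; Complex.I, 0] := rfl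
  have p2 : pauli 2 = !![1, 0; 0, -1] := rfl
  simp only [hmC, hρe, Fin.sum_univ_three, p0, p1, p2]
  have hI2 : Complex.I ^ 2 = -1 := Complex.I_sq
  have hI3 : Complex.I ^ 3 = -Complex.I := by
    rw [pow_succ, hI2]; ring
  ext i j
  fin_cases i <;> fin_cases j <;>
    (simp (config := { decide := true }) [Matrix.mul_apply, Fin.sum_univ_two, levicivita, cross]
     ring_nf
     simp only [hI2, hI3]
     ring_nf)
end

section
/- Let A be a 3×3 complex Hermitian positive semidefinite matrix whose real part is the diagonal matrix diag(a₁,a₂,a₃) with a₁ ≥ a₂ ≥ a₃ ≥ 0, and define b ∈ ℝ³ by b_l = i Σ_{j,k} A_{jk} ε_{jkl} (ε the Levi-Civita symbol; b is real because A is Hermitian). Then f_M(1) ≤ 0, i.e. for every unit vector n ∈ ℝ³ one has Σ_j b_j n_j ≤ Σ_j a_j (1 − n_j²). -/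
set_option maxHeartbeats 1000000

/-- The rate F(r,n) = Σ_j b_j n_j − r Σ_j a_j (1 − n_j²). -/
noncomputable def F (a b : Fin 3 → ℝ) (r : ℝ) (n : Fin 3 → ℝ) : ℝ :=
  (∑ j, b j * n j) - r * ∑ j, a j * (1 - n j ^ 2)

/-- f_M(r) = sup { F(r,n) : |n| = 1 }. -/
noncomputable def fM (a b : Fin 3 → ℝ) (r : ℝ) : ℝ :=
  sSup (F a b r '' {n : Fin 3 → ℝ | (∑ j, n j ^ 2) = 1})

/-- f_m(r) = inf { F(r,n) : |n| = 1 }. -/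
noncomputable def fm (a b : Fin 3 → ℝ) (r : ℝ) : ℝ :=
  sInf (F a b r '' {n : Fin 3 → ℝ | (∑ j, n j ^ 2) = 1})

open Matrix ComplexOrder

/-- For a PSD GKS matrix A with real part diag(a₁,a₂,a₃), a₁ ≥ a₂ ≥ a₃ ≥ 0, and
b_l = i Σ_{jk} A_{jk} ε_{jkl}, one has f_M(1) ≤ 0: for every unit vector n,
Σ_j b_j n_j ≤ Σ_j a_j (1 − n_j²). -/
theorem fM_at_one_nonpos
    (A : Matrix (Fin 3) (Fin 3) ℂ) (hA : A.PosSemidef)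
    (a b : Fin 3 → ℝ) (h12 : a 1 ≤ a 0) (h23 : a 2 ≤ a 1) (h3 : 0 ≤ a 2)
    (hre : ∀ j k, (A j k).re = Matrix.diagonal a j k)
    (hb : ∀ l, (b l : ℂ) = Complex.I * ∑ j, ∑ k, A j k * ((levicivita j k l : ℝ) : ℂ)) :
    fM a b 1 ≤ 0 ∧
      ∀ n : Fin 3 → ℝ, (∑ j, n j ^ 2) = 1 →
        (∑ j, b j * n j) ≤ ∑ j, a j * (1 - n j ^ 2) := by
  have key : ∀ u0 u1 u2 v0 v1 v2 : ℝ,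
      0 ≤ a 0*(u0^2+v0^2) + a 1*(u1^2+v1^2) + a 2*(u2^2+v2^2)
        + b 0*(u1*v2 - u2*v1) + b 1*(u2*v0 - u0*v2) + b 2*(u0*v1 - u1*v0) := by
    intro u0 u1 u2 v0 v1 v2
    have herm : ∀ j k : Fin 3, (A k j).im = -(A j k).im := by
      intro j k
      have h := congr_fun (congr_fun hA.1 k) j
      rw [Matrix.conjTranspose_apply] at h
      rw [← h, Complex.star_def, Complex.conj_im]
    have h0 := hb 0; have h1 := hb 1; have h2 := hb 2
    simp only [Fin.sum_univ_three] at h0 h1 h2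
    norm_num [levicivita, Prod.ext_iff, Fin.ext_iff] at h0 h1 h2
    have e0 := congrArg Complex.re h0
    have e1 := congrArg Complex.re h1
    have e2 := congrArg Complex.re h2
    simp only [Complex.ofReal_re, Complex.mul_re, Complex.I_re, Complex.I_im, Complex.add_im,
      Complex.neg_im, Complex.add_re, Complex.neg_re, zero_mul, one_mul, zero_sub] at e0 e1 e2
    have i12 : (A 1 2).im = -b 0/2 := by have := herm 1 2; linarith
    have i21 : (A 2 1).im = b 0/2 := by have := herm 1 2; linarith
    have i20 : (A 2 0).im = -b 1/2 := by have := herm 2 0; linarith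
    have i02 : (A 0 2).im = b 1/2 := by have := herm 2 0; linarith
    have i01 : (A 0 1).im = -b 2/2 := by have := herm 0 1; linarith
    have i10 : (A 1 0).im = b 2/2 := by have := herm 0 1; linarith
    have r00 : (A 0 0).re = a 0 := by rw [hre]; simp [Matrix.diagonal_apply]
    have r11 : (A 1 1).re = a 1 := by rw [hre]; simp [Matrix.diagonal_apply]
    have r22 : (A 2 2).re = a 2 := by rw [hre]; simp [Matrix.diagonal_apply]
    have r01 : (A 0 1).re = 0 := by
      rw [hre]; simp [Matrix.diagonal_apply, show (0:Fin 3) ≠ 1 by decide]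
    have r10 : (A 1 0).re = 0 := by
      rw [hre]; simp [Matrix.diagonal_apply, show (1:Fin 3) ≠ 0 by decide]
    have r02 : (A 0 2).re = 0 := by
      rw [hre]; simp [Matrix.diagonal_apply, show (0:Fin 3) ≠ 2 by decide]
    have r20 : (A 2 0).re = 0 := by
      rw [hre]; simp [Matrix.diagonal_apply, show (2:Fin 3) ≠ 0 by decide]
    have r12 : (A 1 2).re = 0 := by
      rw [hre]; simp [Matrix.diagonal_apply, show (1:Fin 3) ≠ 2 by decide]
    have r21 : (A 2 1).re = 0 := by
      rw [hre]; simp [Matrix.diagonal_apply, show (2:Fin 3) ≠ 1 by decide]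
    have h := hA.dotProduct_mulVec_nonneg ![(u0:ℂ)+Complex.I*v0, (u1:ℂ)+Complex.I*v1, (u2:ℂ)+Complex.I*v2]
    rw [Complex.le_def] at h
    have h' := h.1
    simp only [dotProduct, Matrix.mulVec, Fin.sum_univ_three, Pi.star_apply,
      Matrix.cons_val_zero, Matrix.cons_val_one, Matrix.head_cons, Matrix.cons_val_two,
      Matrix.tail_cons] at h'
    simp only [Complex.add_re, Complex.add_im, Complex.mul_re, Complex.mul_im, Complex.star_def,
      Complex.conj_re, Complex.conj_im, Complex.I_re, Complex.I_im, Complex.ofReal_re,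
      Complex.ofReal_im, Complex.zero_re] at h'
    rw [i12, i21, i20, i02, i01, i10, r00, r11, r22, r01, r10, r02, r20, r12, r21] at h'
    nlinarith [h']
  have pw : ∀ n : Fin 3 → ℝ, (∑ j, n j ^ 2) = 1 →
      (∑ j, b j * n j) ≤ ∑ j, a j * (1 - n j ^ 2) := by
    intro n hn
    simp only [Fin.sum_univ_three] at hn ⊢
    by_cases hs : n 1 = 0 ∧ n 2 = 0
    · obtain ⟨s1, s2⟩ := hs
      rw [s1, s2] at hn ⊢
      have K := key 0 1 0 0 0 (-(n 0))
      nlinarith [K]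
    · have hs2 : 0 < n 1 ^ 2 + n 2 ^ 2 := by
        rcases not_and_or.mp hs with h | h
        · have : 0 < n 1 ^ 2 := by positivity
          nlinarith [sq_nonneg (n 2)]
        · have : 0 < n 2 ^ 2 := by positivity
          nlinarith [sq_nonneg (n 1)]
      have K := key 0 (n 2) (-(n 1)) (1 - (n 0)^2) (-(n 0 * n 1)) (-(n 0 * n 2))
      have e : a 0*((0:ℝ)^2+(1 - (n 0)^2)^2) + a 1*((n 2)^2+(-(n 0 * n 1))^2)
            + a 2*((-(n 1))^2+(-(n 0 * n 2))^2)
            + b 0*((n 2)*(-(n 0 * n 2)) - (-(n 1))*(-(n 0 * n 1)))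
            + b 1*((-(n 1))*(1 - (n 0)^2) - 0*(-(n 0 * n 2)))
            + b 2*(0*(-(n 0 * n 1)) - (n 2)*(1 - (n 0)^2))
          = (n 1 ^ 2 + n 2 ^ 2) *
            ((a 0 * (1 - n 0 ^ 2) + a 1 * (1 - n 1 ^ 2) + a 2 * (1 - n 2 ^ 2))
              - (b 0 * n 0 + b 1 * n 1 + b 2 * n 2)) := by
        linear_combination (a 1 * n 1 ^ 2 + a 2 * n 2 ^ 2 - a 0 * (1 - n 0 ^ 2) + b 1 * n 1 + b 2 * n 2) * hn
      rw [e] at K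
      nlinarith [K, hs2]
  refine ⟨?_, pw⟩
  apply Real.sSup_le _ le_rfl
  rintro x ⟨n, hn, rfl⟩
  simp only [Set.mem_setOf_eq] at hn
  have := pw n hn
  simp only [F, one_mul]
  linarith
end

section
/- Suppose a₂ > 0, b ≠ 0, and f_M(1) ≤ 0. Then there exists a unique r_T ∈ (0,1] such that f_M(r_T) = 0; moreover f_M(r) > 0 for all r ∈ (0, r_T) and f_M(r) < 0 for all r ∈ (r_T, 1]. -/
namespace TrapAux

def Sph : Set (Fin 3 → ℝ) := {n | (∑ j, n j ^ 2) = 1}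

lemma Sph_compact : IsCompact Sph := by
  have hclosed : IsClosed Sph := isClosed_eq (by fun_prop) continuous_const
  have hbdd : Sph ⊆ Metric.closedBall 0 1 := by
    intro n hn
    simp only [Metric.mem_closedBall, dist_zero_right]
    rw [pi_norm_le_iff_of_nonneg zero_le_one]
    intro j
    have h1 : n j ^ 2 ≤ 1 := by
      rw [← hn]
      exact Finset.single_le_sum (f := fun i => n i ^ 2) (fun i _ => sq_nonneg _)
        (Finset.mem_univ j)
    have h2 := abs_nonneg (n j)
    have h3 := sq_abs (n j)
    simp only [Real.norm_eq_abs]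
    nlinarith
  exact (isCompact_closedBall (0 : Fin 3 → ℝ) 1).of_isClosed_subset hclosed hbdd

lemma Sph_nonempty : Sph.Nonempty :=
  ⟨fun j => if j = 0 then 1 else 0, by simp [Sph, Fin.sum_univ_three]⟩

lemma contF (a b : Fin 3 → ℝ) (r : ℝ) : Continuous (F a b r) := by
  unfold F; fun_prop

lemma img_compact (a b : Fin 3 → ℝ) (r : ℝ) : IsCompact (F a b r '' Sph) :=
  Sph_compact.image (contF a b r)

lemma fM_mem (a b : Fin 3 → ℝ) (r : ℝ) : fM a b r ∈ F a b r '' Sph :=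
  (img_compact a b r).sSup_mem (Sph_nonempty.image _)

lemma le_fM (a b : Fin 3 → ℝ) (r : ℝ) {n : Fin 3 → ℝ} (hn : n ∈ Sph) :
    F a b r n ≤ fM a b r :=
  le_csSup (img_compact a b r).bddAbove ⟨n, hn, rfl⟩

lemma G_bounds (a : Fin 3 → ℝ) (h12 : a 1 ≤ a 0) (h23 : a 2 ≤ a 1) (h3 : 0 ≤ a 2)
    {n : Fin 3 → ℝ} (hn : n ∈ Sph) :
    a 1 ≤ ∑ j, a j * (1 - n j ^ 2) ∧ (∑ j, a j * (1 - n j ^ 2)) ≤ a 0 + a 1 + a 2 := by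
  have hn' : n 0 ^ 2 + n 1 ^ 2 + n 2 ^ 2 = 1 := by
    simpa [Sph, Fin.sum_univ_three] using hn
  rw [Fin.sum_univ_three]
  constructor <;>
    nlinarith [sq_nonneg (n 0), sq_nonneg (n 1), sq_nonneg (n 2),
      mul_nonneg (sub_nonneg.2 h12) (sq_nonneg (n 1)),
      mul_nonneg (sub_nonneg.2 h12) (sq_nonneg (n 2)),
      mul_nonneg (sub_nonneg.2 h23) (sq_nonneg (n 2)),
      mul_nonneg h3 (sq_nonneg (n 2)), mul_nonneg h3 (sq_nonneg (n 0)),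
      mul_nonneg (h3.trans h23) (sq_nonneg (n 1)),
      mul_nonneg ((h3.trans h23).trans h12) (sq_nonneg (n 0))]

lemma F_shift (a b : Fin 3 → ℝ) (r r' : ℝ) (n : Fin 3 → ℝ) :
    F a b r' n = F a b r n - (r' - r) * ∑ j, a j * (1 - n j ^ 2) := by
  unfold F; ring

lemma fM_anti (a b : Fin 3 → ℝ) (h12 : a 1 ≤ a 0) (h23 : a 2 ≤ a 1) (h3 : 0 ≤ a 2)
    {r r' : ℝ} (hrr : r ≤ r') :
    fM a b r' + (r' - r) * a 1 ≤ fM a b r := by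
  obtain ⟨n, hn, hFn⟩ := fM_mem a b r'
  have hG := (G_bounds a h12 h23 h3 hn).1
  have h1 := F_shift a b r r' n
  have h2 : F a b r n ≤ fM a b r := le_fM a b r hn
  have h3' : (r' - r) * a 1 ≤ (r' - r) * ∑ j, a j * (1 - n j ^ 2) :=
    mul_le_mul_of_nonneg_left hG (by linarith)
  rw [← hFn]
  linarith

lemma fM_lower (a b : Fin 3 → ℝ) (h12 : a 1 ≤ a 0) (h23 : a 2 ≤ a 1) (h3 : 0 ≤ a 2)
    {r r' : ℝ} (hrr : r ≤ r') :
    fM a b r - (r' - r) * (a 0 + a 1 + a 2) ≤ fM a b r' := by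
  obtain ⟨n, hn, hFn⟩ := fM_mem a b r
  have hG := (G_bounds a h12 h23 h3 hn).2
  have h1 := F_shift a b r r' n
  have h2 : F a b r' n ≤ fM a b r' := le_fM a b r' hn
  have h3' : (r' - r) * (∑ j, a j * (1 - n j ^ 2)) ≤ (r' - r) * (a 0 + a 1 + a 2) :=
    mul_le_mul_of_nonneg_left hG (by linarith)
  rw [← hFn]
  linarith

lemma fM_dist (a b : Fin 3 → ℝ) (h12 : a 1 ≤ a 0) (h23 : a 2 ≤ a 1) (h3 : 0 ≤ a 2)
    (ha2 : 0 < a 1) (x y : ℝ) :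
    dist (fM a b x) (fM a b y) ≤ (a 0 + a 1 + a 2) * dist x y := by
  wlog hxy : x ≤ y generalizing x y
  · rw [dist_comm (fM a b x), dist_comm x]
    exact this y x (le_of_not_ge hxy)
  have h1 := fM_anti a b h12 h23 h3 hxy
  have h2 := fM_lower a b h12 h23 h3 hxy
  have ha1 : 0 ≤ (y - x) * a 1 := mul_nonneg (by linarith) ha2.le
  rw [Real.dist_eq, Real.dist_eq, abs_of_nonneg (by linarith : (0:ℝ) ≤ fM a b x - fM a b y),
    abs_of_nonpos (by linarith : x - y ≤ 0)]
  linarith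

lemma fM_cont (a b : Fin 3 → ℝ) (h12 : a 1 ≤ a 0) (h23 : a 2 ≤ a 1) (h3 : 0 ≤ a 2)
    (ha2 : 0 < a 1) : Continuous (fM a b) := by
  have hSa : 0 ≤ a 0 + a 1 + a 2 := by linarith
  have : LipschitzWith (a 0 + a 1 + a 2).toNNReal (fM a b) := by
    apply LipschitzWith.of_dist_le_mul
    intro x y
    have := fM_dist a b h12 h23 h3 ha2 x y
    rwa [Real.coe_toNNReal _ hSa]
  exact this.continuous

lemma fM0_pos (a b : Fin 3 → ℝ) (hb : b ≠ 0) : 0 < fM a b 0 := by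
  obtain ⟨j, hj⟩ := Function.ne_iff.mp hb
  have hsum : 0 < ∑ j, b j ^ 2 :=
    Finset.sum_pos' (fun i _ => sq_nonneg _) ⟨j, Finset.mem_univ j, by simpa using sq_pos_of_ne_zero hj⟩
  set s := Real.sqrt (∑ j, b j ^ 2) with hs
  have hspos : 0 < s := Real.sqrt_pos.mpr hsum
  have hs2 : s ^ 2 = ∑ j, b j ^ 2 := Real.sq_sqrt hsum.le
  set n : Fin 3 → ℝ := fun j => b j / s with hndef
  have hnS : n ∈ Sph := by
    simp only [Sph, Set.mem_setOf_eq, hndef, div_pow]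
    rw [← Finset.sum_div, ← hs2]
    field_simp
  have hF : F a b 0 n = s := by
    unfold F
    simp only [zero_mul, sub_zero, hndef]
    rw [Fin.sum_univ_three]
    have hb2 : b 0 ^ 2 + b 1 ^ 2 + b 2 ^ 2 = s ^ 2 := by
      rw [hs2, Fin.sum_univ_three]
    field_simp
    nlinarith
  have := le_fM a b 0 hnS
  rw [hF] at this
  linarith

end TrapAux

open TrapAux in
/-- If a₂ > 0, b ≠ 0 and f_M(1) ≤ 0, there is a unique trap radius r_T ∈ (0,1] with
f_M(r_T) = 0, f_M > 0 on (0,r_T), and f_M < 0 on (r_T,1]. -/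
theorem trap_radius_exists_unique (a b : Fin 3 → ℝ)
    (h12 : a 1 ≤ a 0) (h23 : a 2 ≤ a 1) (h3 : 0 ≤ a 2)
    (ha2 : 0 < a 1) (hb : b ≠ 0) (hf1 : fM a b 1 ≤ 0) :
    ∃ rT ∈ Set.Ioc (0 : ℝ) 1,
      fM a b rT = 0
      ∧ (∀ r' ∈ Set.Ioc (0 : ℝ) 1, fM a b r' = 0 → r' = rT)
      ∧ (∀ r ∈ Set.Ioo (0 : ℝ) rT, 0 < fM a b r)
      ∧ (∀ r ∈ Set.Ioc rT 1, fM a b r < 0) := by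
  have hf0 : 0 < fM a b 0 := fM0_pos a b hb
  have hcont : ContinuousOn (fM a b) (Set.Icc 0 1) :=
    (fM_cont a b h12 h23 h3 ha2).continuousOn
  have hIcc : Set.Icc (fM a b 1) (fM a b 0) ⊆ fM a b '' Set.Icc 0 1 :=
    intermediate_value_Icc' zero_le_one hcont
  obtain ⟨rT, hrTmem, hrT0⟩ := hIcc ⟨hf1, hf0.le⟩
  have strict : ∀ x y : ℝ, x < y → fM a b y < fM a b x := by
    intro x y h
    have h1 := fM_anti a b h12 h23 h3 h.le
    nlinarith [mul_pos (sub_pos.2 h) ha2]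
  have hrTpos : 0 < rT := by
    rcases hrTmem.1.lt_or_eq with h | h
    · exact h
    · exfalso
      rw [← h] at hrT0
      linarith
  refine ⟨rT, ⟨hrTpos, hrTmem.2⟩, hrT0, ?_, ?_, ?_⟩
  · intro r' _ h0
    by_contra hne
    rcases lt_or_gt_of_ne hne with h | h
    · have := strict r' rT h
      rw [h0, hrT0] at this
      exact lt_irrefl 0 this
    · have := strict rT r' h
      rw [h0, hrT0] at this
      exact lt_irrefl 0 this
  · intro r hr
    have := strict r rT hr.2
    rwa [hrT0] at this
  · intro r hr
    have := strict rT r hr.1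
    rwa [hrT0] at this
end

section
/- Suppose a₂ > 0, b ≠ 0, f_M(1) ≤ 0, and let r_T ∈ (0,1] be the unique zero of f_M, so that f_M > 0 on (0, r_T). Then for any r_i, r_f ∈ (0, r_T) there exist a time T ≥ 0, a continuous function n̂ : [0,T] → ℝ³ with |n̂(t)| = 1 for all t, and a differentiable function r : [0,T] → (0,1) such that r(0) = r_i, r(T) = r_f, and r′(t) = F(r(t), n̂(t)) for all t ∈ [0,T]. -/
/-- The damping coefficient is at least a 1 on the unit sphere. -/
lemma Apos (a : Fin 3 → ℝ) (h12 : a 1 ≤ a 0) (h23 : a 2 ≤ a 1) (h3 : 0 ≤ a 2)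
    (n : Fin 3 → ℝ) (hn : (∑ j, n j ^ 2) = 1) :
    a 1 ≤ ∑ j, a j * (1 - n j ^ 2) := by
  rw [Fin.sum_univ_three] at hn ⊢
  nlinarith [sq_nonneg (n 0), sq_nonneg (n 1), sq_nonneg (n 2)]

/-- The sup fM is attained on the unit sphere. -/
lemma fM_attained (a b : Fin 3 → ℝ) (r : ℝ) :
    ∃ n : Fin 3 → ℝ, (∑ j, n j ^ 2) = 1 ∧ F a b r n = fM a b r := by
  set S : Set (Fin 3 → ℝ) := {n | (∑ j, n j ^ 2) = 1} with hS
  have hcont : Continuous fun n : Fin 3 → ℝ => ∑ j, n j ^ 2 :=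
    continuous_finset_sum _ fun j _ => (continuous_apply j).pow 2
  have hclosed : IsClosed S := isClosed_eq hcont continuous_const
  have hsub : S ⊆ Metric.closedBall 0 1 := by
    intro n hn
    rw [Metric.mem_closedBall, dist_zero_right]
    rw [pi_norm_le_iff_of_nonneg zero_le_one]
    intro i
    rw [Real.norm_eq_abs, abs_le]
    have hsum : (∑ j, n j ^ 2) = 1 := hn
    have h2 : n i ^ 2 ≤ 1 := by
      rw [← hsum]
      exact Finset.single_le_sum (f := fun j => n j ^ 2) (fun j _ => sq_nonneg _)
        (Finset.mem_univ i)
    constructor <;> nlinarith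
  have hcomp : IsCompact S :=
    (isCompact_closedBall (0 : Fin 3 → ℝ) 1).of_isClosed_subset hclosed hsub
  have hFcont : Continuous (F a b r) := by
    unfold F
    apply Continuous.sub
    · exact continuous_finset_sum _ fun j _ => continuous_const.mul (continuous_apply j)
    · exact continuous_const.mul
        (continuous_finset_sum _ fun j _ => continuous_const.mul
          (continuous_const.sub ((continuous_apply j).pow 2)))
  have hne : S.Nonempty := by
    refine ⟨![1, 0, 0], ?_⟩
    simp [hS, Fin.sum_univ_three]
  have himg : IsCompact (F a b r '' S) := hcomp.image hFcont
  have himgne : (F a b r '' S).Nonempty := hne.image _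
  have := himg.sSup_mem himgne
  obtain ⟨n, hnS, hFn⟩ := this
  exact ⟨n, hnS, hFn⟩

lemma leg (a b n : Fin 3 → ℝ) (ri rf A B : ℝ)
    (hA : A = ∑ j, a j * (1 - n j ^ 2)) (hB : B = ∑ j, b j * n j)
    (hApos : 0 < A)
    (hq1 : 0 < (B / A - rf) / (B / A - ri))
    (hq2 : (B / A - rf) / (B / A - ri) ≤ 1) :
    ∃ T, 0 ≤ T ∧ ∃ r : ℝ → ℝ, r 0 = ri ∧ r T = rf ∧
      (∀ t ∈ Set.Icc 0 T, r t ∈ Set.uIcc ri rf) ∧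
      (∀ t : ℝ, HasDerivAt r (F a b (r t) n) t) := by
  set c : ℝ := B / A with hc
  set q : ℝ := (c - rf) / (c - ri) with hqdef
  have hne : c - ri ≠ 0 := by
    intro h
    rw [hqdef, h, div_zero] at hq1
    exact lt_irrefl 0 hq1
  have hkey : c + (ri - c) * q = rf := by
    have hq' : q * (c - ri) = c - rf := by rw [hqdef]; exact div_mul_cancel₀ _ hne
    linear_combination -hq'
  refine ⟨-Real.log q / A, ?_, fun t => c + (ri - c) * Real.exp (-(A * t)), ?_, ?_, ?_, ?_⟩
  · have : Real.log q ≤ 0 := Real.log_nonpos (le_of_lt hq1) hq2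
    exact div_nonneg (by linarith) hApos.le
  · simp
  · have hAT : -(A * (-Real.log q / A)) = Real.log q := by
      field_simp
    show c + (ri - c) * Real.exp (-(A * (-Real.log q / A))) = rf
    rw [hAT, Real.exp_log hq1, hkey]
  · intro t ht
    obtain ⟨ht0, htT⟩ := ht
    have hlog : Real.log q ≤ 0 := Real.log_nonpos (le_of_lt hq1) hq2
    have he1 : Real.exp (-(A * t)) ≤ 1 := by
      rw [Real.exp_le_one_iff]
      nlinarith
    have he2 : q ≤ Real.exp (-(A * t)) := by
      have : Real.log q ≤ -(A * t) := by
        have h1 : A * t ≤ A * (-Real.log q / A) := by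
          exact mul_le_mul_of_nonneg_left htT (le_of_lt hApos)
        have h2 : A * (-Real.log q / A) = -Real.log q := by
          field_simp
        nlinarith [h1, h2]
      calc q = Real.exp (Real.log q) := (Real.exp_log hq1).symm
        _ ≤ Real.exp (-(A * t)) := Real.exp_le_exp.mpr this
    rcases le_or_gt c ri with hcr | hcr
    · have h1 : c + (ri - c) * Real.exp (-(A * t)) ≤ ri := by nlinarith
      have h2 : rf ≤ c + (ri - c) * Real.exp (-(A * t)) := by nlinarith
      rw [Set.mem_uIcc]; right; exact ⟨h2, h1⟩
    · have h1 : ri ≤ c + (ri - c) * Real.exp (-(A * t)) := by nlinarith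
      have h2 : c + (ri - c) * Real.exp (-(A * t)) ≤ rf := by nlinarith
      rw [Set.mem_uIcc]; left; exact ⟨h1, h2⟩
  · intro t
    have h1 : HasDerivAt (fun t : ℝ => -(A * t)) (-A) t := by
      have h := ((hasDerivAt_id' t).const_mul A).neg; rwa [mul_one] at h
    have h2 := h1.exp
    have h3 := (h2.const_mul (ri - c)).const_add c
    refine h3.congr_deriv ?_
    have hFr : F a b (c + (ri - c) * Real.exp (-(A * t))) n
        = B - A * (c + (ri - c) * Real.exp (-(A * t))) := by
      simp only [F, ← hA, ← hB]; ring
    rw [hFr]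
    have hAc : A * c = B := by rw [hc]; exact mul_div_cancel₀ B hApos.ne'
    nlinarith [hAc]

/-- There is a unit vector orthogonal to b. -/
lemma exists_perp (b : Fin 3 → ℝ) :
    ∃ w : Fin 3 → ℝ, (∑ j, w j ^ 2) = 1 ∧ (∑ j, b j * w j) = 0 := by
  by_cases h0 : b 0 = 0 ∧ b 1 = 0
  · refine ⟨![1, 0, 0], ?_, ?_⟩ <;> simp [Fin.sum_univ_three, h0.1]
  · have hs2 : 0 < b 0 ^ 2 + b 1 ^ 2 := by
      rcases not_and_or.mp h0 with h | h <;>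
        nlinarith [sq_nonneg (b 0), sq_nonneg (b 1),
          lt_of_le_of_ne (sq_nonneg _) (Ne.symm (pow_ne_zero 2 h))]
    set s : ℝ := Real.sqrt (b 0 ^ 2 + b 1 ^ 2) with hs
    have hspos : 0 < s := Real.sqrt_pos.mpr hs2
    have hssq : s ^ 2 = b 0 ^ 2 + b 1 ^ 2 := Real.sq_sqrt hs2.le
    refine ⟨![b 1 / s, -(b 0) / s, 0], ?_, ?_⟩
    · rw [Fin.sum_univ_three]
      simp only [Matrix.cons_val_zero, Matrix.cons_val_one, Matrix.head_cons,
        Matrix.cons_val_two, Matrix.tail_cons]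
      field_simp
      linarith [hssq]
    · rw [Fin.sum_univ_three]
      simp only [Matrix.cons_val_zero, Matrix.cons_val_one, Matrix.head_cons,
        Matrix.cons_val_two, Matrix.tail_cons]
      field_simp
      ring

/-- Inside the trap (0, r_T) the system is controllable: any r_i can be steered to any r_f
by a continuous unit-vector control n̂ and a trajectory r solving r′ = F(r, n̂). -/
theorem controllable_inside_trap (a b : Fin 3 → ℝ)
    (h12 : a 1 ≤ a 0) (h23 : a 2 ≤ a 1) (h3 : 0 ≤ a 2)
    (ha2 : 0 < a 1) (hb : b ≠ 0) (hf1 : fM a b 1 ≤ 0)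
    (rT : ℝ) (hrT : rT ∈ Set.Ioc (0 : ℝ) 1) (hzero : fM a b rT = 0)
    (huniq : ∀ r' ∈ Set.Ioc (0 : ℝ) 1, fM a b r' = 0 → r' = rT)
    (hpos : ∀ r ∈ Set.Ioo (0 : ℝ) rT, 0 < fM a b r)
    (ri rf : ℝ) (hri : ri ∈ Set.Ioo (0 : ℝ) rT) (hrf : rf ∈ Set.Ioo (0 : ℝ) rT) :
    ∃ (T : ℝ), 0 ≤ T ∧
      ∃ (nh : ℝ → Fin 3 → ℝ) (r : ℝ → ℝ),
        (∀ j, ContinuousOn (fun t => nh t j) (Set.Icc 0 T))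
        ∧ (∀ t ∈ Set.Icc 0 T, (∑ j, nh t j ^ 2) = 1)
        ∧ (∀ t ∈ Set.Icc 0 T, r t ∈ Set.Ioo (0 : ℝ) 1)
        ∧ r 0 = ri ∧ r T = rf
        ∧ (∀ t ∈ Set.Icc 0 T,
            HasDerivWithinAt r (F a b (r t) (nh t)) (Set.Icc 0 T) t) := by
  obtain ⟨hri0, hriT⟩ := hri
  obtain ⟨hrf0, hrfT⟩ := hrf
  obtain ⟨hrT0, hrT1⟩ := hrT
  -- choose the constant control n and establish the leg hypotheses
  have main : ∃ n : Fin 3 → ℝ, (∑ j, n j ^ 2) = 1 ∧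
      0 < (((∑ j, b j * n j) / (∑ j, a j * (1 - n j ^ 2))) - rf) /
          (((∑ j, b j * n j) / (∑ j, a j * (1 - n j ^ 2))) - ri) ∧
      (((∑ j, b j * n j) / (∑ j, a j * (1 - n j ^ 2))) - rf) /
          (((∑ j, b j * n j) / (∑ j, a j * (1 - n j ^ 2))) - ri) ≤ 1 := by
    rcases le_or_gt ri rf with hle | hlt
    · -- increasing leg: maximizer at rf
      obtain ⟨n, hn1, hnF⟩ := fM_attained a b rf
      have hApos : 0 < ∑ j, a j * (1 - n j ^ 2) :=
        lt_of_lt_of_le ha2 (Apos a h12 h23 h3 n hn1)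
      have hFpos : 0 < F a b rf n := by rw [hnF]; exact hpos rf ⟨hrf0, hrfT⟩
      have hF' : 0 < (∑ j, b j * n j) - rf * ∑ j, a j * (1 - n j ^ 2) := hFpos
      set A := ∑ j, a j * (1 - n j ^ 2)
      set B := ∑ j, b j * n j
      have hc : rf < B / A := by
        rw [lt_div_iff₀ hApos]; nlinarith
      refine ⟨n, hn1, div_pos (by linarith) (by linarith), ?_⟩
      rw [div_le_one (by linarith)]
      linarith
    · -- decreasing leg: orthogonal control
      obtain ⟨w, hw1, hwb⟩ := exists_perp b
      have hApos : 0 < ∑ j, a j * (1 - w j ^ 2) :=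
        lt_of_lt_of_le ha2 (Apos a h12 h23 h3 w hw1)
      refine ⟨w, hw1, ?_, ?_⟩
      · rw [hwb, zero_div]
        have : (0 - rf) / (0 - ri) = rf / ri := by
          rw [show (0:ℝ) - rf = -rf by ring, show (0:ℝ) - ri = -ri by ring, neg_div_neg_eq]
        rw [this]
        exact div_pos hrf0 hri0
      · rw [hwb, zero_div]
        have : (0 - rf) / (0 - ri) = rf / ri := by
          rw [show (0:ℝ) - rf = -rf by ring, show (0:ℝ) - ri = -ri by ring, neg_div_neg_eq]
        rw [this, div_le_one hri0]
        linarith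
  obtain ⟨n, hn1, hq1, hq2⟩ := main
  obtain ⟨T, hT0, r, hr0, hrT', hrange, hderiv⟩ :=
    leg a b n ri rf _ _ rfl rfl (lt_of_lt_of_le ha2 (Apos a h12 h23 h3 n hn1)) hq1 hq2
  refine ⟨T, hT0, fun _ => n, r, fun j => continuousOn_const, fun t _ => hn1, ?_, hr0, hrT',
    fun t ht => (hderiv t).hasDerivWithinAt⟩
  intro t ht
  have := hrange t ht
  rw [Set.mem_uIcc] at this
  constructor
  · rcases this with ⟨h1, _⟩ | ⟨h1, _⟩ <;> linarith
  · rcases this with ⟨_, h2⟩ | ⟨_, h2⟩ <;> linarith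
end

section
/- Suppose a₂ > 0, b ≠ 0, f_M(1) ≤ 0, and let r_T ∈ (0,1] be the unique zero of f_M. If n̂ : [0,∞) → ℝ³ is continuous with |n̂(t)| = 1 for all t, and r : [0,∞) → [0,1] is differentiable with r′(t) = F(r(t), n̂(t)) for all t and r(0) ∈ [r_T, 1], then r(t) ≤ r(0) for all t ≥ 0. In particular, no admissible trajectory starting at or above the trap radius r_T can ever increase the Bloch radius above its initial value. -/
/-- Starting at or above the trap radius r_T, no admissible trajectory can ever raise the
Bloch radius above its initial value. -/
theorem no_escape_above_trap (a b : Fin 3 → ℝ)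
    (h12 : a 1 ≤ a 0) (h23 : a 2 ≤ a 1) (h3 : 0 ≤ a 2)
    (ha2 : 0 < a 1) (hb : b ≠ 0) (hf1 : fM a b 1 ≤ 0)
    (rT : ℝ) (hrT : rT ∈ Set.Ioc (0 : ℝ) 1) (hzero : fM a b rT = 0)
    (huniq : ∀ r' ∈ Set.Ioc (0 : ℝ) 1, fM a b r' = 0 → r' = rT)
    (nh : ℝ → Fin 3 → ℝ) (r : ℝ → ℝ)
    (hcont : ∀ j, ContinuousOn (fun t => nh t j) (Set.Ici (0 : ℝ)))
    (hunit : ∀ t ∈ Set.Ici (0 : ℝ), (∑ j, nh t j ^ 2) = 1)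
    (hrange : ∀ t ∈ Set.Ici (0 : ℝ), r t ∈ Set.Icc (0 : ℝ) 1)
    (hderiv : ∀ t ∈ Set.Ici (0 : ℝ),
      HasDerivWithinAt r (F a b (r t) (nh t)) (Set.Ici (0 : ℝ)) t)
    (h0 : r 0 ∈ Set.Icc rT 1) :
    ∀ t : ℝ, 0 ≤ t → r t ≤ r 0 := by
  have ha : ∀ j : Fin 3, 0 ≤ a j := by
    intro j
    fin_cases j
    · exact le_of_lt (lt_of_lt_of_le ha2 h12)
    · exact ha2.le
    · exact h3
  -- nonnegativity of the dissipation term on the sphere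
  have hdiss : ∀ n : Fin 3 → ℝ, (∑ j, n j ^ 2) = 1 → 0 ≤ ∑ j, a j * (1 - n j ^ 2) := by
    intro n hn
    refine Finset.sum_nonneg fun j _ => mul_nonneg (ha j) ?_
    have : n j ^ 2 ≤ ∑ i, n i ^ 2 :=
      Finset.single_le_sum (fun i _ => sq_nonneg (n i)) (Finset.mem_univ j)
    rw [hn] at this; linarith
  have hbdd : ∀ ρ : ℝ, 0 ≤ ρ → BddAbove (F a b ρ '' {n : Fin 3 → ℝ | (∑ j, n j ^ 2) = 1}) := by
    intro ρ hρ
    refine ⟨∑ j, |b j|, ?_⟩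
    rintro x ⟨n, hn, rfl⟩
    have h1 : (∑ j, b j * n j) ≤ ∑ j, |b j| := by
      refine Finset.sum_le_sum fun j _ => ?_
      have hnj : n j ^ 2 ≤ 1 := by
        have : n j ^ 2 ≤ ∑ i, n i ^ 2 :=
          Finset.single_le_sum (fun i _ => sq_nonneg (n i)) (Finset.mem_univ j)
        rw [hn] at this; exact this
      have habs : |n j| ≤ 1 := by nlinarith [sq_abs (n j), abs_nonneg (n j)]
      calc b j * n j ≤ |b j * n j| := le_abs_self _
        _ = |b j| * |n j| := abs_mul _ _
        _ ≤ |b j| * 1 := mul_le_mul_of_nonneg_left habs (abs_nonneg _)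
        _ = |b j| := mul_one _
    have h2 : 0 ≤ ρ * ∑ j, a j * (1 - n j ^ 2) := mul_nonneg hρ (hdiss n hn)
    simp only [F]; linarith
  -- key: for ρ ≥ rT and unit n, F a b ρ n ≤ 0
  have hkey : ∀ ρ : ℝ, rT ≤ ρ → ∀ n : Fin 3 → ℝ, (∑ j, n j ^ 2) = 1 → F a b ρ n ≤ 0 := by
    intro ρ hρ n hn
    have h1 : F a b ρ n ≤ F a b rT n := by
      have := hdiss n hn
      simp only [F]
      nlinarith
    have h2 : F a b rT n ≤ fM a b rT :=
      le_csSup (hbdd rT hrT.1.le) ⟨n, hn, rfl⟩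
    linarith [hzero ▸ h2]
  have hcontr : ContinuousOn r (Set.Ici (0 : ℝ)) :=
    fun u hu => (hderiv u hu).continuousWithinAt
  intro t ht
  by_contra hlt
  push_neg at hlt
  -- the set of times in [0, t] where r ≤ r 0
  set S : Set ℝ := Set.Icc 0 t ∩ r ⁻¹' Set.Iic (r 0) with hS
  have hScl : IsClosed S :=
    (hcontr.mono (Set.Icc_subset_Ici_self)).preimage_isClosed_of_isClosed
      isClosed_Icc isClosed_Iic
  have hSne : S.Nonempty := ⟨0, by exact ⟨⟨le_refl 0, ht⟩, le_refl (r 0)⟩⟩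
  have hSbdd : BddAbove S := ⟨t, fun u hu => hu.1.2⟩
  set s := sSup S with hs
  have hsS : s ∈ S := hScl.csSup_mem hSne hSbdd
  have hs0 : 0 ≤ s := hsS.1.1
  have hst : s ≤ t := hsS.1.2
  have hrs : r s ≤ r 0 := hsS.2
  have hsltt : s < t := by
    rcases lt_or_eq_of_le hst with h | h
    · exact h
    · exact absurd (h ▸ hrs) (not_le.2 hlt)
  -- on (s, t], r > r 0 ≥ rT
  have hgt : ∀ u ∈ Set.Ioc s t, r 0 < r u := by
    intro u hu
    by_contra hle
    push_neg at hle
    have : u ∈ S := ⟨⟨le_trans hs0 hu.1.le, hu.2⟩, hle⟩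
    exact absurd (le_csSup hSbdd this) (not_le.2 hu.1)
  -- r is antitone on [s, t]
  have hanti : AntitoneOn r (Set.Icc s t) := by
    have hsub : Set.Icc s t ⊆ Set.Ici (0 : ℝ) := fun u hu => le_trans hs0 hu.1
    refine antitoneOn_of_deriv_nonpos (convex_Icc s t) (hcontr.mono hsub) ?_ ?_
    · intro x hx
      rw [interior_Icc] at hx
      have hx0 : (0 : ℝ) < x := lt_of_le_of_lt hs0 hx.1
      exact ((hderiv x hx0.le).hasDerivAt (Ici_mem_nhds hx0)).differentiableAt.differentiableWithinAt
    · intro x hx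
      rw [interior_Icc] at hx
      have hx0 : (0 : ℝ) < x := lt_of_le_of_lt hs0 hx.1
      have hd := (hderiv x hx0.le).hasDerivAt (Ici_mem_nhds hx0)
      rw [hd.deriv]
      exact hkey (r x) (le_trans h0.1 (hgt x ⟨hx.1, hx.2.le⟩).le) (nh x) (hunit x hx0.le)
  have : r t ≤ r s := hanti (Set.left_mem_Icc.2 hst) (Set.right_mem_Icc.2 hst) hst
  linarith
end

section
/- Suppose a₁ = a₂ = a > 0, a₃ = 0, b₁ = b₂ = 0, and b₃ ≠ 0 with |b₃| ≤ 2a. Then for every r > 0: f_m(r) = −|b₃| − 2ar; f_M(r) = |b₃| − 2ar if r ≤ |b₃|/(2a), and f_M(r) = b₃²/(4ar) − ar if r ≥ |b₃|/(2a). In particular, the unique zero of f_M in (0,1] is r_T = |b₃|/(2a). -/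

lemma F_simp (aa b₃ r : ℝ) (n : Fin 3 → ℝ) (hn : (∑ j, n j ^ 2) = 1) :
    F ![aa,aa,0] ![0,0,b₃] r n = b₃ * n 2 - aa * r * (1 + (n 2)^2) := by
  simp [F, Fin.sum_univ_three] at hn ⊢
  linear_combination (-(aa*r)) * hn

lemma sq_le_one (n : Fin 3 → ℝ) (hn : (∑ j, n j ^ 2) = 1) : (n 2)^2 ≤ 1 := by
  simp [Fin.sum_univ_three] at hn
  nlinarith [sq_nonneg (n 0), sq_nonneg (n 1)]

lemma mem_S (aa b₃ r t : ℝ) (ht : t^2 ≤ 1) :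
    b₃ * t - aa * r * (1 + t^2) ∈
      F ![aa,aa,0] ![0,0,b₃] r '' {n : Fin 3 → ℝ | (∑ j, n j ^ 2) = 1} := by
  have h0 : (0:ℝ) ≤ 1 - t^2 := by linarith
  have hn : (∑ j, (![Real.sqrt (1 - t^2), 0, t] : Fin 3 → ℝ) j ^ 2) = 1 := by
    simp [Fin.sum_univ_three, Real.sq_sqrt h0]
  refine ⟨_, hn, ?_⟩
  rw [F_simp _ _ _ _ hn]
  simp

lemma fm_formula (aa b₃ r : ℝ) (ha : 0 < aa) (hr : 0 < r) (hb3 : b₃ ≠ 0) :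
    fm ![aa,aa,0] ![0,0,b₃] r = -|b₃| - 2*aa*r := by
  have hb : |b₃| ≠ 0 := abs_ne_zero.mpr hb3
  have hsq : b₃^2 = |b₃|^2 := (sq_abs b₃).symm
  apply IsLeast.csInf_eq
  constructor
  · have ht : (-b₃/|b₃|)^2 = 1 := by field_simp; exact hsq
    have hval : b₃ * (-b₃/|b₃|) - aa*r*(1 + (-b₃/|b₃|)^2) = -|b₃| - 2*aa*r := by
      rw [ht]; field_simp; linear_combination -hsq
    rw [← hval]
    exact mem_S aa b₃ r _ (le_of_eq ht)
  · rintro x ⟨n, hn, rfl⟩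
    rw [F_simp _ _ _ _ hn]
    have h1 := sq_le_one n hn
    have h2 : -|b₃| ≤ b₃ := neg_abs_le b₃
    have h3 : b₃ ≤ |b₃| := le_abs_self b₃
    nlinarith [mul_nonneg (by linarith : (0:ℝ) ≤ |b₃| + b₃) (by nlinarith : (0:ℝ) ≤ 1 + n 2),
      mul_nonneg (by linarith : (0:ℝ) ≤ |b₃| - b₃) (by nlinarith : (0:ℝ) ≤ 1 - n 2),
      mul_nonneg (mul_nonneg ha.le hr.le) (by linarith : (0:ℝ) ≤ 1 - (n 2)^2)]

lemma fM_formula1 (aa b₃ r : ℝ) (hb3 : b₃ ≠ 0) (h2ar : 2*aa*r ≤ |b₃|) :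
    fM ![aa,aa,0] ![0,0,b₃] r = |b₃| - 2*aa*r := by
  have hb : |b₃| ≠ 0 := abs_ne_zero.mpr hb3
  have hsq : b₃^2 = |b₃|^2 := (sq_abs b₃).symm
  apply IsGreatest.csSup_eq
  constructor
  · have ht : (b₃/|b₃|)^2 = 1 := by field_simp; exact hsq
    have hval : b₃ * (b₃/|b₃|) - aa*r*(1 + (b₃/|b₃|)^2) = |b₃| - 2*aa*r := by
      rw [ht]; field_simp; linear_combination hsq
    rw [← hval]
    exact mem_S aa b₃ r _ (le_of_eq ht)
  · rintro x ⟨n, hn, rfl⟩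
    rw [F_simp _ _ _ _ hn]
    have h1 := sq_le_one n hn
    have h2 : -|b₃| ≤ b₃ := neg_abs_le b₃
    have h3 : b₃ ≤ |b₃| := le_abs_self b₃
    nlinarith [mul_nonneg (by linarith : (0:ℝ) ≤ |b₃| + b₃) (sq_nonneg (n 2 - 1)),
      mul_nonneg (by linarith : (0:ℝ) ≤ |b₃| - b₃) (sq_nonneg (n 2 + 1)),
      mul_nonneg (by linarith : (0:ℝ) ≤ |b₃| - 2*aa*r) (by linarith : (0:ℝ) ≤ 1 - (n 2)^2)]

lemma fM_formula2 (aa b₃ r : ℝ) (ha : 0 < aa) (hr : 0 < r) (h2ar : |b₃| ≤ 2*aa*r) :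
    fM ![aa,aa,0] ![0,0,b₃] r = b₃^2/(4*aa*r) - aa*r := by
  have har : 0 < 4*aa*r := by positivity
  have hsq : b₃^2 = |b₃|^2 := (sq_abs b₃).symm
  apply IsGreatest.csSup_eq
  constructor
  · have ht : (b₃/(2*aa*r))^2 ≤ 1 := by
      rw [div_pow, div_le_one (by positivity)]
      nlinarith [abs_nonneg b₃]
    have hval : b₃ * (b₃/(2*aa*r)) - aa*r*(1 + (b₃/(2*aa*r))^2)
        = b₃^2/(4*aa*r) - aa*r := by
      field_simp; ring
    rw [← hval]
    exact mem_S aa b₃ r _ ht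
  · rintro x ⟨n, hn, rfl⟩
    rw [F_simp _ _ _ _ hn]
    have key : b₃^2/(4*aa*r) - aa*r - (b₃ * n 2 - aa*r*(1 + (n 2)^2))
        = (b₃ - 2*aa*r*(n 2))^2/(4*aa*r) := by
      field_simp; ring
    nlinarith [div_nonneg (sq_nonneg (b₃ - 2*aa*r*(n 2))) har.le, key]

/-- The analytically solvable case a₁ = a₂ = a > 0, a₃ = 0, b = (0,0,b₃) with
0 < |b₃| ≤ 2a: explicit formulas for f_m and f_M, and the trap radius is |b₃|/(2a). -/
theorem analytic_case (aa b₃ : ℝ) (ha : 0 < aa) (hb3 : b₃ ≠ 0) (hle : |b₃| ≤ 2 * aa) :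
    (∀ r : ℝ, 0 < r →
      fm ![aa, aa, 0] ![0, 0, b₃] r = -|b₃| - 2 * aa * r
      ∧ (r ≤ |b₃| / (2 * aa) →
          fM ![aa, aa, 0] ![0, 0, b₃] r = |b₃| - 2 * aa * r)
      ∧ (|b₃| / (2 * aa) ≤ r →
          fM ![aa, aa, 0] ![0, 0, b₃] r = b₃ ^ 2 / (4 * aa * r) - aa * r))
    ∧ fM ![aa, aa, 0] ![0, 0, b₃] (|b₃| / (2 * aa)) = 0
    ∧ (∀ r ∈ Set.Ioc (0 : ℝ) 1,
        fM ![aa, aa, 0] ![0, 0, b₃] r = 0 → r = |b₃| / (2 * aa)) := by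
  have hb : 0 < |b₃| := abs_pos.mpr hb3
  have hrt : 0 < |b₃| / (2 * aa) := by positivity
  refine ⟨fun r hr => ⟨fm_formula aa b₃ r ha hr hb3, fun h => ?_, fun h => ?_⟩, ?_, ?_⟩
  · exact fM_formula1 aa b₃ r hb3 (by rw [le_div_iff₀ (by positivity)] at h; linarith)
  · exact fM_formula2 aa b₃ r ha hr (by rw [div_le_iff₀ (by positivity)] at h; linarith)
  · rw [fM_formula1 aa b₃ _ hb3 (by field_simp; exact le_rfl)]
    field_simp
    ring
  · rintro r ⟨hr0, hr1⟩ hz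
    rcases le_total r (|b₃| / (2 * aa)) with h | h
    · rw [fM_formula1 aa b₃ r hb3 (by rw [le_div_iff₀ (by positivity)] at h; linarith)] at hz
      rw [eq_div_iff (by positivity : (2*aa) ≠ 0)]; linarith
    · rw [fM_formula2 aa b₃ r ha hr0 (by rw [div_le_iff₀ (by positivity)] at h; linarith)] at hz
      have h4 : b₃^2 = 4*aa^2*r^2 := by
        field_simp at hz; nlinarith [hz]
      have h5 : 2*aa*r = |b₃| := by
        nlinarith [sq_abs b₃, abs_nonneg b₃, mul_pos ha hr0, sq_nonneg (2*aa*r - |b₃|), hb]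
      rw [eq_div_iff (by positivity : (2*aa) ≠ 0)]; linarith
end

section
/- Suppose a₂ > 0 and f_M(1) = 0. Then f_M(r) > 0 for all r ∈ (0,1); that is, the trap radius equals 1 and the system is purifiable. -/
/-- If a₂ > 0 and f_M(1) = 0 then f_M > 0 on (0,1): the trap radius equals 1 and the
system is purifiable. -/
theorem purifiable_of_fM_one_zero (a b : Fin 3 → ℝ)
    (h12 : a 1 ≤ a 0) (h23 : a 2 ≤ a 1) (h3 : 0 ≤ a 2)
    (ha2 : 0 < a 1) (hf1 : fM a b 1 = 0) :
    ∀ r ∈ Set.Ioo (0 : ℝ) 1, 0 < fM a b r := by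
  intro r hr
  obtain ⟨hr0, hr1⟩ := hr
  have hne : ({n : Fin 3 → ℝ | (∑ j, n j ^ 2) = 1}).Nonempty := by
    refine ⟨![1, 0, 0], ?_⟩
    simp [Fin.sum_univ_three]
  -- each coordinate squared is ≤ 1 on the sphere
  have hsq : ∀ n : Fin 3 → ℝ, (∑ j, n j ^ 2) = 1 → ∀ j, n j ^ 2 ≤ 1 := by
    intro n hn j
    have h := Finset.single_le_sum (f := fun i => n i ^ 2)
      (fun i _ => sq_nonneg (n i)) (Finset.mem_univ j)
    rw [hn] at h
    exact h
  -- G(n) ≥ a 1 on the sphere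
  have hG : ∀ n : Fin 3 → ℝ, (∑ j, n j ^ 2) = 1 →
      a 1 ≤ ∑ j, a j * (1 - n j ^ 2) := by
    intro n hn
    have h0 := hsq n hn 0
    have h1 := hsq n hn 1
    simp only [Fin.sum_univ_three] at hn ⊢
    nlinarith [sq_nonneg (n 2)]
  have hGpos : ∀ n : Fin 3 → ℝ, (∑ j, n j ^ 2) = 1 →
      0 ≤ ∑ j, a j * (1 - n j ^ 2) := fun n hn => le_trans ha2.le (hG n hn)
  -- bounded above
  have hbdd : BddAbove (F a b r '' {n : Fin 3 → ℝ | (∑ j, n j ^ 2) = 1}) := by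
    refine ⟨∑ j, |b j|, ?_⟩
    rintro y ⟨n, hn, rfl⟩
    simp only [Set.mem_setOf_eq] at hn
    have h1 : ∀ j ∈ Finset.univ, b j * n j ≤ |b j| := by
      intro j _
      have h2 : |n j| ≤ 1 := by
        nlinarith [hsq n hn j, sq_abs (n j), abs_nonneg (n j)]
      calc b j * n j ≤ |b j * n j| := le_abs_self _
        _ = |b j| * |n j| := abs_mul _ _
        _ ≤ |b j| * 1 := by
            exact mul_le_mul_of_nonneg_left h2 (abs_nonneg _)
        _ = |b j| := mul_one _
    have h3 : (∑ j, b j * n j) ≤ ∑ j, |b j| := Finset.sum_le_sum h1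
    have h4 : 0 ≤ r * ∑ j, a j * (1 - n j ^ 2) :=
      mul_nonneg hr0.le (hGpos n hn)
    unfold F
    linarith
  -- key inequality: fM 1 ≤ fM r - (1-r) * a 1
  have key : fM a b 1 ≤ fM a b r - (1 - r) * a 1 := by
    apply csSup_le (hne.image _)
    rintro y ⟨n, hn, rfl⟩
    simp only [Set.mem_setOf_eq] at hn
    have h1 : F a b r n ≤ fM a b r := le_csSup hbdd ⟨n, hn, rfl⟩
    have h2 : F a b 1 n + (1 - r) * (∑ j, a j * (1 - n j ^ 2)) = F a b r n := by
      unfold F; ring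
    have h3 := hG n hn
    have h4 : (1 - r) * a 1 ≤ (1 - r) * (∑ j, a j * (1 - n j ^ 2)) :=
      mul_le_mul_of_nonneg_left h3 (by linarith)
    linarith
  rw [hf1] at key
  nlinarith
end
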